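/- Let O be the real algebra with basis {e^x : x ∈ F_8} and multiplication e^x e^y = (-1)^{tr(y x^6)} e^{x+y}. Then for all x, y, z ∈ F_8, (e^x e^y)e^z = e^x(e^y e^z) if x, y, z are F_2-linearly dependent, and (e^x e^y)e^z = −e^x(e^y e^z) if x, y, z are F_2-linearly independent. -/
import Mathlib


open scoped Classical
noncomputable section

abbrev F8 := GaloisField 2 3

instance : Fintype F8 := Fintype.ofFinite F8

def tr (x : F8) : F8 := x + x ^ 2 + x ^ 4

/-- The sign `(-1)^{φ(x,y)}` where `φ(x,y) = tr(y x⁶)`. -/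
def sgn (x y : F8) : ℝ := if tr (y * x ^ 6) = 0 then 1 else -1

/-- Multiplication of the twisted group algebra `ℝ_σ[F₈]`, on coordinates:
octonions are functions `F8 → ℝ`, and `e^x e^y = (-1)^{tr(y x⁶)} e^{x+y}`. -/
def omul (a b : F8 → ℝ) : F8 → ℝ := fun z => ∑ x : F8, sgn x (z + x) * a x * b (z + x)

/-- The basis element `e^x`. -/
def e (x : F8) : F8 → ℝ := fun w => if w = x then 1 else 0

/-- Octonion conjugation: `a* = Re(a) - Im(a)`. -/
def conj (a : F8 → ℝ) : F8 → ℝ := fun w => if w = 0 then a 0 else - a w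

/-- The norm `N(a) = Σ aₓ²`. -/
def N (a : F8 → ℝ) : ℝ := ∑ x : F8, (a x) ^ 2


lemma h2 : (2 : F8) = 0 := CharTwo.two_eq_zero
lemma pow8 (a : F8) : a ^ 8 = a := by
  have h : Fintype.card F8 = 8 := by
    rw [← Nat.card_eq_fintype_card, GaloisField.card 2 3 (by norm_num)]; norm_num
  simpa [h] using FiniteField.pow_card a

lemma tr_add (a b : F8) : tr (a + b) = tr a + tr b := by
  unfold tr
  linear_combination (a*b + 2*a^3*b + 3*a^2*b^2 + 2*a*b^3) * h2

lemma tr_sq (a : F8) : tr (a ^ 2) = tr a := by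
  unfold tr; linear_combination pow8 a

lemma tr_idem (a : F8) : tr a ^ 2 = tr a := by
  unfold tr; linear_combination pow8 a + (a^3 + a^5 + a^6) * h2

lemma tr_zero_or_one (a : F8) : tr a = 0 ∨ tr a = 1 := by
  have := tr_idem a
  have h : tr a * (tr a - 1) = 0 := by ring_nf; linear_combination this
  rcases mul_eq_zero.mp h with h | h
  · exact Or.inl h
  · exact Or.inr (by linear_combination h)

lemma tr_zero : tr 0 = 0 := by unfold tr; ring
lemma tr_one : tr 1 = 1 := by unfold tr; linear_combination h2

def Es (t : F8) : ℝ := if tr t = 0 then 1 else -1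

lemma sgn_eq (x y : F8) : sgn x y = Es (y * x ^ 6) := rfl

lemma Es_mul (a b : F8) : Es a * Es b = Es (a + b) := by
  unfold Es
  rw [tr_add]
  rcases tr_zero_or_one a with ha | ha <;> rcases tr_zero_or_one b with hb | hb <;>
    simp [ha, hb, one_ne_zero, show (1:F8)+1 = 0 from by linear_combination h2]

lemma Es_sq (a : F8) : Es a * Es a = 1 := by
  unfold Es; split <;> norm_num

-- the key trace vanishing: tr (x * (x^2 y^4 + x^4 y^2)) = 0
lemma L1 (x y : F8) : tr (x * (x^2*y^4 + x^4*y^2)) = 0 := by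
  have e1 : x * (x^2*y^4 + x^4*y^2) = x^3*y^4 + x^5*y^2 := by ring
  have e2 : (x^5*y^2)^2 = x^3*y^4 := by
    have := pow8 x
    linear_combination y^4 * x^2 * this
  rw [e1, tr_add, ← e2, tr_sq]
  linear_combination tr (x^5*y^2) * h2

lemma L2 (x y : F8) : tr (y * (x^2*y^4 + x^4*y^2)) = 0 := by
  have : y * (x^2*y^4 + x^4*y^2) = y * (y^2*x^4 + y^4*x^2) := by ring
  rw [this, L1 y x]
-- product of the four signs
lemma four_signs (x y z : F8) :
    sgn x y * sgn (x+y) z * (sgn y z * sgn x (y+z)) =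
      Es (z * (x^2*y^4 + x^4*y^2)) := by
  rw [sgn_eq, sgn_eq, sgn_eq, sgn_eq, Es_mul, Es_mul, Es_mul]
  congr 1
  linear_combination (y*x^6 + z*(x^6+y^6+3*x^5*y+7*x^4*y^2+10*x^3*y^3+7*x^2*y^4+3*x*y^5)) * h2

lemma sign_rel (x y z : F8) :
    sgn x y * sgn (x+y) z = Es (z * (x^2*y^4 + x^4*y^2)) * (sgn y z * sgn x (y+z)) := by
  have h4 := four_signs x y z
  have hy := Es_sq (z * y ^ 6)
  have hx := Es_sq ((y+z) * x ^ 6)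
  calc sgn x y * sgn (x+y) z
      = sgn x y * sgn (x+y) z * (sgn y z * sgn x (y+z)) * (sgn y z * sgn x (y+z)) := by
        rw [sgn_eq y z, sgn_eq x (y+z)]
        linear_combination (-(sgn x y * sgn (x+y) z) * Es ((y+z) * x ^ 6)^2) * hy + (-(sgn x y * sgn (x+y) z)) * hx
    _ = Es (z * (x^2*y^4 + x^4*y^2)) * (sgn y z * sgn x (y+z)) := by rw [h4]
lemma li_iff (x y z : F8) :
    LinearIndependent (ZMod 2) ![x, y, z] ↔
      (x ≠ 0 ∧ y ≠ 0 ∧ z ≠ 0 ∧ x + y ≠ 0 ∧ x + z ≠ 0 ∧ y + z ≠ 0 ∧ x + y + z ≠ 0) := by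
  rw [Fintype.linearIndependent_iff]
  have hcase : ∀ u : ZMod 2, u = 0 ∨ u = 1 := by decide
  constructor
  · intro h
    refine ⟨?_, ?_, ?_, ?_, ?_, ?_, ?_⟩ <;> intro hc
    · exact one_ne_zero (h ![1,0,0] (by simp [Fin.sum_univ_three, hc]) 0)
    · exact one_ne_zero (h ![0,1,0] (by simp [Fin.sum_univ_three, hc]) 1)
    · exact one_ne_zero (h ![0,0,1] (by simp [Fin.sum_univ_three, hc]) 2)
    · exact one_ne_zero (h ![1,1,0] (by simp [Fin.sum_univ_three, hc]) 0)
    · exact one_ne_zero (h ![1,0,1] (by simp [Fin.sum_univ_three, hc]) 0)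
    · exact one_ne_zero (h ![0,1,1] (by simp [Fin.sum_univ_three, hc]) 1)
    · exact one_ne_zero (h ![1,1,1] (by simp [Fin.sum_univ_three, hc]) 0)
  · rintro ⟨h1, h2', h3, h4, h5, h6, h7⟩ g hg i
    rcases hcase (g 0) with g0 | g0 <;> rcases hcase (g 1) with g1 | g1 <;>
      rcases hcase (g 2) with g2 | g2 <;>
      simp only [Fin.sum_univ_three, g0, g1, g2, zero_smul, one_smul, add_zero, zero_add,
        Matrix.cons_val_zero, Matrix.cons_val_one, Matrix.head_cons,
        Matrix.cons_val_two, Matrix.tail_cons] at hg <;>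
      first
        | exact absurd hg (by assumption)
        | exact absurd hg h7
        | (fin_cases i <;> simp [g0, g1, g2])
lemma eq_of_add_eq_zero {a b : F8} (h : a + b = 0) : a = b := by
  have := CharTwo.neg_eq (R := F8) b
  linear_combination h + this

lemma Q_dep (x y z : F8) (h : ¬ LinearIndependent (ZMod 2) ![x, y, z]) :
    tr (z * (x^2*y^4 + x^4*y^2)) = 0 := by
  rw [li_iff] at h
  by_cases hx : x = 0
  · have e0 : z * (x^2*y^4 + x^4*y^2) = 0 := by rw [hx]; ring
    rw [e0, tr_zero]
  by_cases hy : y = 0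
  · have e0 : z * (x^2*y^4 + x^4*y^2) = 0 := by rw [hy]; ring
    rw [e0, tr_zero]
  by_cases hz : z = 0
  · have e0 : z * (x^2*y^4 + x^4*y^2) = 0 := by rw [hz]; ring
    rw [e0, tr_zero]
  by_cases hxy : x + y = 0
  · have hyx : x = y := eq_of_add_eq_zero hxy
    have e0 : z * (x^2*y^4 + x^4*y^2) = 0 := by
      rw [← hyx]; linear_combination z * x^6 * h2
    rw [e0, tr_zero]
  by_cases hxz : x + z = 0
  · rw [← eq_of_add_eq_zero hxz]; exact L1 x y
  by_cases hyz : y + z = 0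
  · rw [← eq_of_add_eq_zero hyz]; exact L2 x y
  have hxyz : x + y + z = 0 := by
    by_contra hc
    exact h ⟨hx, hy, hz, hxy, hxz, hyz, hc⟩
  have hzxy : z = x + y := (eq_of_add_eq_zero hxyz).symm
  rw [hzxy]
  have e0 : (x+y) * (x^2*y^4 + x^4*y^2) =
      x * (x^2*y^4 + x^4*y^2) + y * (x^2*y^4 + x^4*y^2) := by ring
  rw [e0, tr_add, L1, L2, add_zero]
lemma Q_indep (x y z : F8) (h : LinearIndependent (ZMod 2) ![x, y, z]) :
    tr (z * (x^2*y^4 + x^4*y^2)) ≠ 0 := by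
  obtain ⟨hx, hy, hz, hxy, hxz, hyz, hxyz⟩ := (li_iff x y z).mp h
  intro hQ
  set s : F8 := x^2*y^4 + x^4*y^2 with hs
  have hsne : s ≠ 0 := by
    have e0 : s = (x*y*(x+y))^2 := by
      rw [hs]; linear_combination (-(x^3*y^3)) * h2
    rw [e0]
    exact pow_ne_zero _ (mul_ne_zero (mul_ne_zero hx hy) hxy)
  have t0 : tr ((0:F8) * s) = 0 := by rw [zero_mul, tr_zero]
  have tx : tr (x * s) = 0 := L1 x y
  have ty : tr (y * s) = 0 := L2 x y
  have tz : tr (z * s) = 0 := hQ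
  have tsum : ∀ a b : F8, tr (a * s) = 0 → tr (b * s) = 0 → tr ((a + b) * s) = 0 := by
    intro a b ha hb
    have e0 : (a + b) * s = a * s + b * s := by ring
    rw [e0, tr_add, ha, hb, add_zero]
  -- x, y, z form a basis of F8 over ZMod 2
  have hcard : Fintype.card (Fin 3) = Module.finrank (ZMod 2) F8 := by
    rw [GaloisField.finrank 2 (by norm_num)]; simp
  let b := basisOfLinearIndependentOfCardEqFinrank h hcard
  have hb : ∀ i, b i = ![x, y, z] i := fun i => by
    rw [coe_basisOfLinearIndependentOfCardEqFinrank]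
  have hrepr := b.sum_repr s⁻¹
  rw [Fin.sum_univ_three, hb 0, hb 1, hb 2] at hrepr
  simp only [Matrix.cons_val_zero, Matrix.cons_val_one, Matrix.head_cons,
    Matrix.cons_val_two, Matrix.tail_cons] at hrepr
  have hcase : ∀ u : ZMod 2, u = 0 ∨ u = 1 := by decide
  have htr : tr (s⁻¹ * s) = 0 := by
    rcases hcase (b.repr s⁻¹ 0) with g0 | g0 <;> rcases hcase (b.repr s⁻¹ 1) with g1 | g1 <;>
      rcases hcase (b.repr s⁻¹ 2) with g2 | g2 <;>
      rw [g0, g1, g2] at hrepr <;>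
      simp only [zero_smul, one_smul, add_zero, zero_add] at hrepr <;>
      rw [← hrepr]
    · exact t0
    · exact tz
    · exact ty
    · exact tsum y z ty tz
    · exact tx
    · exact tsum x z tx tz
    · exact tsum x y tx ty
    · exact tsum (x+y) z (tsum x y tx ty) tz
  rw [inv_mul_cancel₀ hsne, tr_one] at htr
  exact one_ne_zero htr

lemma omul_single (x : F8) (c : ℝ) (u : F8) (b : F8 → ℝ) :
    omul (fun w => if w = x then c else 0) b =
      fun w => c * sgn x (w + x) * b (w + x) := by
  funext w
  unfold omul
  rw [Finset.sum_eq_single x]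
  · simp only [if_true, eq_self_iff_true]
    ring
  · intro t _ ht
    simp [ht]
  · simp


lemma e_single (x : F8) : e x = fun w => if w = x then (1:ℝ) else 0 := rfl

lemma add_self_key (a w : F8) : w + a + a = w := by
  rw [add_assoc, CharTwo.add_self_eq_zero, add_zero]

lemma omul_e_e (x y : F8) :
    omul (e x) (e y) = fun w => if w = x + y then sgn x y else 0 := by
  rw [e_single x, omul_single x 1 x (e y)]
  funext w
  by_cases hw : w = x + y
  · rw [hw, if_pos rfl]
    have h1 : x + y + x = y := by
      rw [add_comm x y, add_assoc, CharTwo.add_self_eq_zero, add_zero]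
    rw [h1]
    simp [e]
  · rw [if_neg hw]
    have h1 : w + x ≠ y := by
      intro hc
      exact hw (by rw [← hc]; rw [add_comm w x, ← add_assoc, CharTwo.add_self_eq_zero, zero_add])
    simp [e, h1]
lemma lhs_eq (x y z : F8) :
    omul (omul (e x) (e y)) (e z) =
      fun w => if w = x + y + z then sgn x y * sgn (x+y) z else 0 := by
  rw [omul_e_e, omul_single (x+y) (sgn x y) 0 (e z)]
  funext w
  by_cases hw : w = x + y + z
  · have hz : w + (x+y) = z := by
      linear_combination hw + CharTwo.add_self_eq_zero (x+y)
    rw [if_pos hw, hz]; simp [e]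
  · have hz : w + (x+y) ≠ z := fun hc =>
      hw (by linear_combination hc - CharTwo.add_self_eq_zero (x+y))
    rw [if_neg hw]; simp [e, hz]

lemma rhs_eq (x y z : F8) :
    omul (e x) (omul (e y) (e z)) =
      fun w => if w = x + y + z then sgn x (y+z) * sgn y z else 0 := by
  rw [omul_e_e y z, show e x = fun w => if w = x then (1:ℝ) else 0 from rfl,
    omul_single x 1 0 _]
  funext w
  by_cases hw : w = x + y + z
  · have hz : w + x = y + z := by
      linear_combination hw + CharTwo.add_self_eq_zero x
    rw [if_pos hw]
    simp [hz]
  · have hz : w + x ≠ y + z := fun hc =>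
      hw (by linear_combination hc - CharTwo.add_self_eq_zero x)
    rw [if_neg hw]
    simp only [if_neg hz]
    ring


theorem basis_associativity (x y z : F8) :
    (¬ LinearIndependent (ZMod 2) ![x, y, z] →
      omul (omul (e x) (e y)) (e z) = omul (e x) (omul (e y) (e z))) ∧
    (LinearIndependent (ZMod 2) ![x, y, z] →
      omul (omul (e x) (e y)) (e z) = - omul (e x) (omul (e y) (e z))) := by
  constructor
  · intro h
    have hQ := Q_dep x y z h
    rw [lhs_eq, rhs_eq]
    funext w
    by_cases hw : w = x + y + z
    · rw [if_pos hw, if_pos hw, sign_rel x y z]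
      unfold Es
      rw [if_pos hQ]
      ring
    · rw [if_neg hw, if_neg hw]
  · intro h
    have hQ := Q_indep x y z h
    rw [lhs_eq, rhs_eq]
    funext w
    simp only [Pi.neg_apply]
    by_cases hw : w = x + y + z
    · rw [if_pos hw, if_pos hw, sign_rel x y z]
      unfold Es
      rw [if_neg hQ]
      ring
    · rw [if_neg hw, if_neg hw]
      ring
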